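/- In K{{t}} with the higher topology, the ring of integers 𝒪{{t}} and the rank-two ring of integers Σ_{i<0} 𝔭 t^i + Σ_{i≥0} 𝒪 t^i are neither compactoid nor c-compact (they are bounded and complete 𝒪-submodules which fail to be compactoid). -/

import Mathlib

/-!
Common setting: `K` is a characteristic-zero local field (a finite extension of `ℚ_p`)
with ring of integers `𝒪 = {c : K | ‖c‖ ≤ 1}`, maximal ideal `𝔭 = {c : K | ‖c‖ < 1}`,
residue field of cardinality `q` and the absolute value normalised by `‖π‖ = q⁻¹`.
We formalise the two-dimensional local fields `K((t))` (as `LaurentSeries K`) and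
`K{{t}}` (as the submodule `mixedCarrier K` of `ℤ → K`), their higher topologies, and
the relevant functional-analytic notions (lattices, seminorms, boundedness,
c-compactness, compactoidness, completeness for nets, duality).
-/

open Filter Topology Set Pointwise
open scoped Classical

noncomputable section

namespace TwoDimLF

variable (K : Type) [NontriviallyNormedField K]

/-- `K` is a characteristic-zero nonarchimedean local field: the norm is nonarchimedean,
takes the values `q^ℤ` on `K˟` (with a uniformizer of norm `q⁻¹`), `K` is complete, locally
compact, of characteristic zero, and the residue field has exactly `q` elements. -/
structure IsCharZeroLocalField (q : ℕ) : Prop where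
  nonarch : ∀ x y : K, ‖x + y‖ ≤ max ‖x‖ ‖y‖
  one_lt_q : 1 < q
  norm_values : ∀ x : K, x ≠ 0 → ∃ n : ℤ, ‖x‖ = (q : ℝ) ^ (-n)
  exists_uniformizer : ∃ π : K, ‖π‖ = ((q : ℝ))⁻¹
  charZero : CharZero K
  locallyCompact : LocallyCompactSpace K
  complete : CompleteSpace K
  residue_card : ∃ s : Finset K, s.card = q ∧
    ∀ x : K, ‖x‖ ≤ 1 → ∃! y, y ∈ s ∧ ‖x - y‖ < 1

/-- The fractional ideal `𝔭^n ⊆ K` for `n ∈ ℤ ∪ {-∞}`, with the convention `𝔭^(-∞) = K`. -/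
def pB (q : ℕ) (n : WithBot ℤ) : Set K :=
  WithBot.recBotCoe Set.univ (fun m : ℤ => {x : K | ‖x‖ ≤ (q : ℝ) ^ (-m)}) n

/-- The fractional ideal `𝔭^n ⊆ K` for `n ∈ ℤ ∪ {∞}`, with the convention `𝔭^∞ = {0}`. -/
def pT (q : ℕ) (n : WithTop ℤ) : Set K :=
  WithTop.recTopCoe {0} (fun m : ℤ => {x : K | ‖x‖ ≤ (q : ℝ) ^ (-m)}) n

/-- The fractional ideal `𝔭^n ⊆ K` for `n ∈ ℤ ∪ {±∞}`. -/
def pE (q : ℕ) (n : WithBot (WithTop ℤ)) : Set K :=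
  WithBot.recBotCoe Set.univ (fun m : WithTop ℤ => pT K q m) n

/-- `q ^ n ∈ ℝ` for `n ∈ ℤ ∪ {-∞}`, with the convention `q^(-∞) = 0`. -/
def qpow (q : ℕ) (n : WithBot ℤ) : ℝ :=
  WithBot.recBotCoe 0 (fun m : ℤ => (q : ℝ) ^ m) n

/-- `1 - k` for `k ∈ ℤ ∪ {±∞}` (so `1 - (±∞) = ∓∞`). -/
def oneSubE : WithBot (WithTop ℤ) → WithBot (WithTop ℤ) :=
  WithBot.recBotCoe ((⊤ : WithTop ℤ) : WithBot (WithTop ℤ))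
    (WithTop.recTopCoe (⊥ : WithBot (WithTop ℤ))
      (fun z : ℤ => (((1 - z : ℤ) : WithTop ℤ) : WithBot (WithTop ℤ))))

section LCS

variable {V : Type} [AddCommGroup V] [Module K V]

/-- `S` is an `𝒪`-submodule of the `K`-vector space `V`, where `𝒪 = {c : K | ‖c‖ ≤ 1}`
is the ring of integers of `K`. -/
def IsOSubmodule (S : Set V) : Prop :=
  (0 : V) ∈ S ∧ (∀ x ∈ S, ∀ y ∈ S, x + y ∈ S) ∧
    ∀ c : K, ‖c‖ ≤ 1 → ∀ x ∈ S, c • x ∈ S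

/-- `S` is an `𝒪`-lattice in `V`: an `𝒪`-submodule such that every vector is carried
into `S` by some nonzero scalar. -/
def IsLatticeSet (S : Set V) : Prop :=
  IsOSubmodule K S ∧ ∀ v : V, ∃ a : K, a ≠ 0 ∧ a • v ∈ S

/-- A (nonarchimedean) seminorm on the `K`-vector space `V`. -/
def IsSeminorm (N : V → ℝ) : Prop :=
  (∀ (c : K) (v : V), N (c • v) = ‖c‖ * N v) ∧ ∀ v w : V, N (v + w) ≤ max (N v) (N w)

/-- The gauge seminorm of a lattice `Λ ⊆ V`: `‖v‖_Λ = inf {‖a‖ : v ∈ aΛ}`. -/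
def gaugeSeminorm (Λ : Set V) (v : V) : ℝ :=
  sInf {r : ℝ | ∃ a : K, v ∈ a • Λ ∧ r = ‖a‖}

/-- The group topology on `W` determined by a family `B` of neighbourhoods of zero:
neighbourhoods of `x` are generated by the translates `x + U`, `U ∈ B`. -/
def addTopologyOf {W : Type} [AddCommGroup W] (B : Set (Set W)) : TopologicalSpace W :=
  TopologicalSpace.mkOfNhds fun x => Filter.map (fun v => x + v) (⨅ U ∈ B, Filter.principal U)

/-- `B` is (Von-Neumann) bounded for the locally convex topology `τ`: every open lattice
absorbs it. -/
def IsVNBounded (τ : TopologicalSpace V) (B : Set V) : Prop :=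
  ∀ Λ : Set V, IsLatticeSet K Λ → IsOpen[τ] Λ → ∃ a : K, B ⊆ a • Λ

/-- The `𝒪`-submodule `A ⊆ V` is c-compact: for every decreasing filtered family of open
lattices `L i`, the canonical map `A → lim A/(L i ∩ A)` is surjective (phrased via
compatible families of representatives). -/
def IsCCompact (τ : TopologicalSpace V) (A : Set V) : Prop :=
  ∀ (ι : Type) (L : ι → Set V),
    (∀ i, IsLatticeSet K (L i) ∧ IsOpen[τ] (L i)) →
    (∀ i j, ∃ k, L k ⊆ L i ∧ L k ⊆ L j) →
    ∀ x : ι → V, (∀ i, x i ∈ A) →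
      (∀ i j, L j ⊆ L i → x j - x i ∈ L i) →
      ∃ a ∈ A, ∀ i, a - x i ∈ L i

/-- The `𝒪`-submodule `A ⊆ V` is compactoid: for every open lattice `Λ` there are finitely
many vectors `v₁, …, v_m ∈ V` with `A ⊆ Λ + 𝒪v₁ + ⋯ + 𝒪v_m`. -/
def IsCompactoid (τ : TopologicalSpace V) (A : Set V) : Prop :=
  ∀ Λ : Set V, IsLatticeSet K Λ → IsOpen[τ] Λ →
    ∃ (m : ℕ) (v : Fin m → V),
      A ⊆ {u : V | ∃ l ∈ Λ, ∃ c : Fin m → K, (∀ j, ‖c j‖ ≤ 1) ∧ u = l + ∑ j, c j • v j}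

/-- `A ⊆ V` is complete: every Cauchy net with values in `A` converges to a point of `A`
(for the topology `τ`). -/
def IsNetComplete (τ : TopologicalSpace V) (A : Set V) : Prop :=
  ∀ (ι : Type) [Preorder ι] [Nonempty ι],
    (∀ i j : ι, ∃ k, i ≤ k ∧ j ≤ k) →
    ∀ x : ι → V, (∀ i, x i ∈ A) →
      (∀ U ∈ @nhds V τ 0, ∃ i0, ∀ j ≥ i0, ∀ k ≥ i0, x j - x k ∈ U) →
      ∃ a ∈ A, Filter.Tendsto x Filter.atTop (@nhds V τ a)

/-- `τ` makes `V` a locally convex topological `K`-vector space: it is a vector-space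
topology whose filter of neighbourhoods of zero admits a basis of lattices. -/
def IsLCTVS (τ : TopologicalSpace V) : Prop :=
  @IsTopologicalAddGroup V τ _ ∧ @ContinuousSMul K V _ _ τ ∧
    ∀ S ∈ @nhds V τ 0, ∃ Λ : Set V, IsLatticeSet K Λ ∧ Λ ∈ @nhds V τ 0 ∧ Λ ⊆ S

/-- The topological dual of `(V, τ)`: continuous `K`-linear forms, as a set of functions. -/
def dualSet (τ : TopologicalSpace V) : Set (V → K) :=
  {l | IsLinearMap K l ∧ @Continuous V K τ _ l}

/-- Basic neighbourhoods of zero for the `c`-topology on `V → K`: uniform convergence on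
compactoid `𝒪`-submodules. -/
def cTopBasic (τ : TopologicalSpace V) : Set (Set (V → K)) :=
  {S | ∃ (B : Set V) (ε : ℝ), IsOSubmodule K B ∧ IsCompactoid K τ B ∧ 0 < ε ∧
    S = {l : V → K | ∀ x ∈ B, ‖l x‖ ≤ ε}}

/-- The `c`-topology (uniform convergence on compactoid `𝒪`-submodules) on `V → K`. -/
def cTop (τ : TopologicalSpace V) : TopologicalSpace (V → K) :=
  addTopologyOf (cTopBasic K τ)

/-- The pseudo-polar `A^p = {l ∈ V' : |l(v)| < 1 for all v ∈ A}`. -/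
def pseudoPolar (τ : TopologicalSpace V) (A : Set V) : Set (V → K) :=
  {l | l ∈ dualSet K τ ∧ ∀ v ∈ A, ‖l v‖ < 1}

/-- The pseudo-bipolar `A^{pp} = {v ∈ V : |l(v)| < 1 for all l ∈ A^p}`. -/
def pseudoBipolar (τ : TopologicalSpace V) (A : Set V) : Set V :=
  {v | ∀ l ∈ pseudoPolar K τ A, ‖l v‖ < 1}

end LCS

/-! ### The equal characteristic field `K((t))` -/

/-- Basic neighbourhoods of zero for the higher topology on `K((t))`:
`Σ U_i t^i` where each `U_i` is an open neighbourhood of `0` in `K` and `U_i = K` for all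
sufficiently large `i`. -/
def laurentBasic : Set (Set (LaurentSeries K)) :=
  {S | ∃ U : ℤ → Set K, (∀ i, IsOpen (U i) ∧ (0 : K) ∈ U i) ∧
    (∃ N : ℤ, ∀ i, N ≤ i → U i = Set.univ) ∧
    S = {f : LaurentSeries K | ∀ i, f.coeff i ∈ U i}}

/-- The higher topology on `K((t))`. -/
def laurentTop : TopologicalSpace (LaurentSeries K) := addTopologyOf (laurentBasic K)

/-- `Λ = Σ_{i∈ℤ} 𝔭^{n_i} t^i ⊆ K((t))` for a sequence `(n_i) ⊆ ℤ ∪ {-∞}`. -/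
def laurentLambda (q : ℕ) (n : ℤ → WithBot ℤ) : Set (LaurentSeries K) :=
  {f | ∀ i, f.coeff i ∈ pB K q (n i)}

/-- `B = Σ_{i∈ℤ} 𝔭^{k_i} t^i ⊆ K((t))` for a sequence `(k_i) ⊆ ℤ ∪ {∞}`. -/
def laurentPT (q : ℕ) (k : ℤ → WithTop ℤ) : Set (LaurentSeries K) :=
  {f | ∀ i, f.coeff i ∈ pT K q (k i)}

/-- `A = Σ_{i∈ℤ} 𝔭^{k_i} t^i ⊆ K((t))` for a sequence `(k_i) ⊆ ℤ ∪ {±∞}`. -/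
def laurentPE (q : ℕ) (k : ℤ → WithBot (WithTop ℤ)) : Set (LaurentSeries K) :=
  {f | ∀ i, f.coeff i ∈ pE K q (k i)}

/-- The admissible seminorm `‖Σ x_i t^i‖ = max_i ‖x_i‖ q^{n_i}` on `K((t))`. -/
def laurentSeminorm (q : ℕ) (n : ℤ → WithBot ℤ) (f : LaurentSeries K) : ℝ :=
  sSup {r : ℝ | ∃ i : ℤ, r = ‖f.coeff i‖ * qpow q (n i)}

/-- The ring of integers `K[[t]] ⊆ K((t))`. -/
def laurentIntegers : Set (LaurentSeries K) := {f | ∀ i, i < 0 → f.coeff i = 0}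

/-- The rank-two ring of integers `𝒪 + tK[[t]] ⊆ K((t))`. -/
def laurentRankTwo : Set (LaurentSeries K) :=
  {f | (∀ i, i < 0 → f.coeff i = 0) ∧ ‖f.coeff 0‖ ≤ 1}

/-- The pairing `γ(x)(y) = π₀(xy) = Σ_i x_i y_{-i}` on `K((t))`. -/
def laurentPairing (x y : LaurentSeries K) : K := ∑' i : ℤ, x.coeff i * y.coeff (-i)

/-! ### The mixed characteristic field `K{{t}}` -/

/-- The underlying `K`-vector space of `K{{t}}`: functions `x : ℤ → K` (coefficients of
`Σ x_i t^i`) with `inf_i v_K(x_i) > -∞` (i.e. bounded norms) and `x_i → 0` as `i → -∞`. -/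
def mixedCarrier : Submodule K (ℤ → K) where
  carrier := {x | (∃ C : ℝ, ∀ i, ‖x i‖ ≤ C) ∧ Filter.Tendsto x Filter.atBot (nhds (0 : K))}
  zero_mem' := ⟨⟨0, fun i => by simp⟩, tendsto_const_nhds⟩
  add_mem' := by
    rintro x y ⟨⟨C, hC⟩, hx⟩ ⟨⟨D, hD⟩, hy⟩
    refine ⟨⟨C + D, fun i => (norm_add_le _ _).trans (add_le_add (hC i) (hD i))⟩, ?_⟩
    have h2 := hx.add hy
    rw [add_zero] at h2
    exact h2
  smul_mem' := by
    rintro c x ⟨⟨C, hC⟩, hx⟩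
    refine ⟨⟨‖c‖ * C, fun i => ?_⟩, ?_⟩
    · have h : ‖(c • x) i‖ = ‖c‖ * ‖x i‖ := by simp [norm_smul]
      rw [h]
      exact mul_le_mul_of_nonneg_left (hC i) (norm_nonneg c)
    · have h2 := hx.const_smul c
      rw [smul_zero] at h2
      exact h2

/-- The field `K{{t}}`, as a `K`-vector space. -/
abbrev Mt := ↥(mixedCarrier K)

/-- Basic neighbourhoods of zero for the higher topology on `K{{t}}`:
`Σ V_i t^i` where each `V_i` is an open neighbourhood of `0` in `K`, some `𝔭^c` is
contained in every `V_i`, and for every `l` eventually `𝔭^l ⊆ V_i`. -/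
def mixedBasic (q : ℕ) : Set (Set (Mt K)) :=
  {S | ∃ Vs : ℤ → Set K, (∀ i, IsOpen (Vs i) ∧ (0 : K) ∈ Vs i) ∧
    (∃ c : ℤ, ∀ i, {x : K | ‖x‖ ≤ (q : ℝ) ^ (-c)} ⊆ Vs i) ∧
    (∀ l : ℤ, ∃ i0 : ℤ, ∀ i, i0 ≤ i → {x : K | ‖x‖ ≤ (q : ℝ) ^ (-l)} ⊆ Vs i) ∧
    S = {f : Mt K | ∀ i, f.1 i ∈ Vs i}}

/-- The higher topology on `K{{t}}`. -/
def mixedTop (q : ℕ) : TopologicalSpace (Mt K) := addTopologyOf (mixedBasic K q)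

/-- `Λ = Σ_{i∈ℤ} 𝔭^{n_i} t^i ⊆ K{{t}}` for a sequence `(n_i) ⊆ ℤ ∪ {-∞}`. -/
def mixedLambda (q : ℕ) (n : ℤ → WithBot ℤ) : Set (Mt K) :=
  {f | ∀ i, f.1 i ∈ pB K q (n i)}

/-- `B = Σ_{i∈ℤ} 𝔭^{k_i} t^i ⊆ K{{t}}` for a sequence `(k_i) ⊆ ℤ ∪ {∞}`. -/
def mixedPT (q : ℕ) (k : ℤ → WithTop ℤ) : Set (Mt K) :=
  {f | ∀ i, f.1 i ∈ pT K q (k i)}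

/-- `A = Σ_{i∈ℤ} 𝔭^{k_i} t^i ⊆ K{{t}}` for a sequence `(k_i) ⊆ ℤ ∪ {±∞}`. -/
def mixedPE (q : ℕ) (k : ℤ → WithBot (WithTop ℤ)) : Set (Mt K) :=
  {f | ∀ i, f.1 i ∈ pE K q (k i)}

/-- The admissible seminorm `‖Σ x_i t^i‖ = sup_i ‖x_i‖ q^{n_i}` on `K{{t}}`. -/
def mixedSeminorm (q : ℕ) (n : ℤ → WithBot ℤ) (f : Mt K) : ℝ :=
  sSup {r : ℝ | ∃ i : ℤ, r = ‖f.1 i‖ * qpow q (n i)}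

/-- The ring of integers `𝒪{{t}} ⊆ K{{t}}`. -/
def mixedIntegers : Set (Mt K) := {f | ∀ i, ‖f.1 i‖ ≤ 1}

/-- The rank-two ring of integers `Σ_{i<0} 𝔭 t^i + Σ_{i≥0} 𝒪 t^i ⊆ K{{t}}`. -/
def mixedRankTwo (q : ℕ) : Set (Mt K) :=
  {f | (∀ i : ℤ, i < 0 → ‖f.1 i‖ ≤ ((q : ℝ))⁻¹) ∧ ∀ i : ℤ, 0 ≤ i → ‖f.1 i‖ ≤ 1}

/-- The monomial `t^i ∈ K{{t}}`. -/
def mixedT (i : ℤ) : Mt K :=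
  ⟨fun j => if j = i then 1 else 0,
    ⟨⟨1, fun j => by by_cases h : j = i <;> simp [h]⟩, by
      refine (tendsto_const_nhds : Filter.Tendsto (fun _ : ℤ => (0 : K))
        Filter.atBot (nhds 0)).congr' ?_
      filter_upwards [Filter.eventually_le_atBot (i - 1)] with j hj
      have h : j ≠ i := by omega
      simp [h]⟩⟩

/-- Coefficients of the product of two elements of `K{{t}}` (Cauchy product). -/
def mixedMulCoeff (x y : Mt K) : ℤ → K := fun k => ∑' i : ℤ, x.1 i * y.1 (k - i)

/-- Multiplication on `K{{t}}`. -/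
def mixedMul (x y : Mt K) : Mt K :=
  if h : mixedMulCoeff K x y ∈ mixedCarrier K then ⟨_, h⟩ else 0

/-- The pairing `γ(x)(y) = π₀(xy) = Σ_i x_i y_{-i}` on `K{{t}}`. -/
def mixedPairing (x y : Mt K) : K := ∑' i : ℤ, x.1 i * y.1 (-i)


section Aux
set_option linter.unusedSectionVars false
variable {K} {q : ℕ}

/-- closed ball `𝔭^c`. -/
def pball (q : ℕ) (c : ℤ) : Set K := {x : K | ‖x‖ ≤ (q : ℝ) ^ (-c)}

lemma hq1R (hq : 1 < q) : (1:ℝ) < q := by exact_mod_cast hq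

lemma hq0 (hq : 1 < q) : (0:ℝ) < q := lt_trans one_pos (hq1R hq)

lemma pball_mono (hq : 1 < q) {c c' : ℤ} (h : c' ≤ c) : (pball q c : Set K) ⊆ pball q c' :=
  fun x hx => le_trans hx (zpow_le_zpow_right₀ (le_of_lt (hq1R hq)) (by omega))

lemma zero_mem_pball (hq : 1 < q) (c : ℤ) : (0:K) ∈ pball q c := by
  have : (0:ℝ) < (q:ℝ) ^ (-c) := zpow_pos (hq0 hq) _
  simp only [pball, Set.mem_setOf_eq, norm_zero]
  exact this.le

lemma isOpen_pball (hna : ∀ x y : K, ‖x + y‖ ≤ max ‖x‖ ‖y‖) (hq : 1 < q) (c : ℤ) :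
    IsOpen (pball q c : Set K) := by
  rw [Metric.isOpen_iff]
  intro x hx
  refine ⟨(q:ℝ)^(-c), zpow_pos (hq0 hq) _, fun y hy => ?_⟩
  have h1 : ‖y - x‖ < (q:ℝ)^(-c) := by simpa [dist_eq_norm] using hy
  have h2 : ‖x + (y - x)‖ ≤ max ‖x‖ ‖y - x‖ := hna _ _
  simp only [add_sub_cancel] at h2
  exact le_trans h2 (max_le hx h1.le)

/-- every open nbhd of 0 in K contains some pball -/
lemma exists_pball_subset (hq : 1 < q) {V : Set K} (hV : IsOpen V) (h0 : (0:K) ∈ V) :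
    ∃ m : ℤ, (pball q m : Set K) ⊆ V := by
  obtain ⟨ε, hε, hb⟩ := Metric.isOpen_iff.1 hV 0 h0
  obtain ⟨n, hn⟩ := exists_pow_lt_of_lt_one hε (show ((q:ℝ))⁻¹ < 1 by
    rw [inv_lt_one_iff₀]; right; exact hq1R hq)
  refine ⟨n, fun x hx => hb ?_⟩
  have hx' : ‖x‖ ≤ ((q:ℝ))⁻¹ ^ n := by
    simpa [pball, zpow_neg, inv_pow, zpow_natCast] using hx
  simp only [Metric.mem_ball, dist_zero_right]
  exact lt_of_le_of_lt hx' hn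

/-- the "ball lattice" determined by exponents `e`. -/
def ballLat (q : ℕ) (e : ℤ → ℤ) : Set (Mt K) := {f | ∀ i, f.1 i ∈ pball q (e i)}

lemma ballLat_zero (hq : 1 < q) (e : ℤ → ℤ) : (0 : Mt K) ∈ ballLat q e := by
  intro i
  show (0:K) ∈ _
  exact zero_mem_pball hq _

lemma ballLat_add (hna : ∀ x y : K, ‖x + y‖ ≤ max ‖x‖ ‖y‖) {e : ℤ → ℤ} {f g : Mt K}
    (hf : f ∈ ballLat q e) (hg : g ∈ ballLat q e) : f + g ∈ ballLat q e := by
  intro i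
  have : ((f + g : Mt K) : ℤ → K) i = f.1 i + g.1 i := rfl
  show ‖((f + g : Mt K) : ℤ → K) i‖ ≤ _
  rw [this]
  exact le_trans (hna _ _) (max_le (hf i) (hg i))

lemma ballLat_smul {e : ℤ → ℤ} {a : K} (ha : ‖a‖ ≤ 1) {f : Mt K}
    (hf : f ∈ ballLat q e) : a • f ∈ ballLat q e := by
  intro i
  have h1 : ((a • f : Mt K) : ℤ → K) i = a * f.1 i := rfl
  show ‖((a • f : Mt K) : ℤ → K) i‖ ≤ _
  rw [h1, norm_mul]
  calc ‖a‖ * ‖f.1 i‖ ≤ 1 * ((q:ℝ) ^ (-(e i))) :=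
        mul_le_mul ha (hf i) (norm_nonneg _) one_pos.le
    _ = _ := one_mul _

lemma ballLat_mem_basic (hna : ∀ x y : K, ‖x + y‖ ≤ max ‖x‖ ‖y‖) (hq : 1 < q) {e : ℤ → ℤ}
    (hbdd : ∃ c, ∀ i, e i ≤ c) (hev : ∀ l : ℤ, ∃ i0, ∀ i, i0 ≤ i → e i ≤ l) :
    ballLat q e ∈ mixedBasic K q := by
  obtain ⟨c, hc⟩ := hbdd
  refine ⟨fun i => pball q (e i), fun i => ⟨isOpen_pball hna hq _, zero_mem_pball hq _⟩,
    ⟨c, fun i => pball_mono hq (hc i)⟩, fun l => ?_, rfl⟩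
  obtain ⟨i0, hi0⟩ := hev l
  exact ⟨i0, fun i hi => pball_mono hq (hi0 i hi)⟩

lemma isOpen_addTopologyOf_iff {W : Type} [AddCommGroup W] (B : Set (Set W)) (s : Set W) :
    IsOpen[addTopologyOf B] s ↔
      ∀ x ∈ s, (fun v => x + v) ⁻¹' s ∈ ⨅ U ∈ B, Filter.principal U :=
  Iff.rfl

lemma ballLat_isOpen (hna : ∀ x y : K, ‖x + y‖ ≤ max ‖x‖ ‖y‖) (hq : 1 < q) {e : ℤ → ℤ}
    (hbdd : ∃ c, ∀ i, e i ≤ c) (hev : ∀ l : ℤ, ∃ i0, ∀ i, i0 ≤ i → e i ≤ l) :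
    IsOpen[mixedTop K q] (ballLat q e) := by
  rw [mixedTop, isOpen_addTopologyOf_iff]
  intro x hx
  have hsub : ballLat q e ⊆ (fun v => x + v) ⁻¹' ballLat q e :=
    fun u hu => ballLat_add hna hx hu
  exact Filter.mem_of_superset
    (Filter.mem_iInf_of_mem (ballLat q e)
      (Filter.mem_iInf_of_mem (ballLat_mem_basic hna hq hbdd hev)
        (Filter.mem_principal_self _))) hsub

lemma ballLat_lattice (hna : ∀ x y : K, ‖x + y‖ ≤ max ‖x‖ ‖y‖) (hq : 1 < q) {e : ℤ → ℤ}
    (hbdd : ∃ c, ∀ i, e i ≤ c) : IsLatticeSet K (ballLat (K := K) q e) := by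
  obtain ⟨c, hc⟩ := hbdd
  refine ⟨⟨ballLat_zero hq e, fun x hx y hy => ballLat_add hna hx hy,
    fun a ha x hx => ballLat_smul ha hx⟩, fun v => ?_⟩
  obtain ⟨C, hC⟩ := v.2.1
  have hC0 : 0 ≤ C := le_trans (norm_nonneg _) (hC 0)
  have hr : (0:ℝ) < (q:ℝ) ^ (-c) / (C + 1) := by
    apply div_pos (zpow_pos (hq0 hq) _); linarith
  obtain ⟨a, ha0, har⟩ := NormedField.exists_norm_lt K hr
  refine ⟨a, fun h => by simp [h] at ha0, fun i => ?_⟩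
  have h1 : ((a • v : Mt K) : ℤ → K) i = a * v.1 i := rfl
  show ‖((a • v : Mt K) : ℤ → K) i‖ ≤ _
  rw [h1, norm_mul]
  have h2 : ‖a‖ * ‖v.1 i‖ ≤ ‖a‖ * (C + 1) := by
    apply mul_le_mul_of_nonneg_left _ (norm_nonneg a)
    linarith [hC i]
  have h3 : ‖a‖ * (C + 1) < (q:ℝ) ^ (-c) := by
    rw [← div_mul_cancel₀ ((q:ℝ) ^ (-c)) (show (C+1) ≠ 0 by linarith)]
    exact mul_lt_mul_of_pos_right har (by linarith)
  have h4 : ((q:ℝ)) ^ (-c) ≤ (q:ℝ) ^ (-(e i)) :=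
    zpow_le_zpow_right₀ (hq1R hq).le (by have := hc i; omega)
  exact le_trans (le_of_lt (lt_of_le_of_lt h2 h3)) h4


lemma mixedBasic_inter (hq : 1 < q) {U V : Set (Mt K)} (hU : U ∈ mixedBasic K q)
    (hV : V ∈ mixedBasic K q) : U ∩ V ∈ mixedBasic K q := by
  obtain ⟨Vs, hVs, ⟨c1, hc1⟩, hev1, rfl⟩ := hU
  obtain ⟨Ws, hWs, ⟨c2, hc2⟩, hev2, rfl⟩ := hV
  refine ⟨fun i => Vs i ∩ Ws i,
    fun i => ⟨(hVs i).1.inter (hWs i).1, (hVs i).2, (hWs i).2⟩,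
    ⟨max c1 c2, fun i => Set.subset_inter
      ((pball_mono hq (le_max_left c1 c2)).trans (hc1 i))
      ((pball_mono hq (le_max_right c1 c2)).trans (hc2 i))⟩, fun l => ?_, ?_⟩
  · obtain ⟨i1, h1⟩ := hev1 l
    obtain ⟨i2, h2⟩ := hev2 l
    exact ⟨max i1 i2, fun i hi => Set.subset_inter
      (h1 i (le_trans (le_max_left _ _) hi)) (h2 i (le_trans (le_max_right _ _) hi))⟩
  · ext f
    simp only [Set.mem_inter_iff, Set.mem_setOf_eq, ← forall_and]

lemma univ_mem_mixedBasic : {f : Mt K | ∀ i, f.1 i ∈ (Set.univ : Set K)} ∈ mixedBasic K q :=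
  ⟨fun _ => Set.univ, fun _ => ⟨isOpen_univ, Set.mem_univ _⟩, ⟨0, fun _ => Set.subset_univ _⟩,
    fun _ => ⟨0, fun _ _ => Set.subset_univ _⟩, rfl⟩

lemma mem_iInf_basic_iff (hq : 1 < q) {t : Set (Mt K)} :
    t ∈ (⨅ U ∈ mixedBasic K q, Filter.principal U) ↔ ∃ U ∈ mixedBasic K q, U ⊆ t := by
  rw [Filter.mem_biInf_of_directed]
  · simp only [Filter.mem_principal]
  · rintro U hU V hV
    exact ⟨U ∩ V, mixedBasic_inter hq hU hV,
      Filter.principal_mono.2 Set.inter_subset_left,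
      Filter.principal_mono.2 Set.inter_subset_right⟩
  · exact ⟨_, univ_mem_mixedBasic⟩

lemma exists_basic_of_isOpen (hq : 1 < q) {s : Set (Mt K)} (hs : IsOpen[mixedTop K q] s)
    {x : Mt K} (hx : x ∈ s) : ∃ U ∈ mixedBasic K q, ∀ u ∈ U, x + u ∈ s := by
  rw [mixedTop, isOpen_addTopologyOf_iff] at hs
  obtain ⟨U, hU, hsub⟩ := (mem_iInf_basic_iff hq).1 (hs x hx)
  exact ⟨U, hU, fun u hu => hsub hu⟩

/-- refinement: every basic set contains a ball lattice. -/
lemma exists_ballLat_subset (hna : ∀ x y : K, ‖x + y‖ ≤ max ‖x‖ ‖y‖) (hq : 1 < q)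
    {U : Set (Mt K)} (hU : U ∈ mixedBasic K q) :
    ∃ e : ℤ → ℤ, (∃ c, ∀ i, e i ≤ c) ∧ (∀ l : ℤ, ∃ i0, ∀ i, i0 ≤ i → e i ≤ l) ∧
      ballLat q e ⊆ U := by
  classical
  obtain ⟨Vs, hVs, ⟨c0, hc0⟩, hev, rfl⟩ := hU
  have hm' : ∀ i, ∃ m : ℤ, (pball q m : Set K) ⊆ Vs i :=
    fun i => exists_pball_subset hq (hVs i).1 (hVs i).2
  choose m hm using hm'
  choose j hj using hev
  let s : ℤ → Finset ℤ := fun i => (Finset.Icc (-i) (m i)).filter (fun l => j l ≤ i)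
  let aux : ℤ → ℤ := fun i => if h : (s i).Nonempty then (s i).min' h else m i
  have haux_le : ∀ i, aux i ≤ m i := by
    intro i
    by_cases h : (s i).Nonempty
    · have hmem := Finset.min'_mem (s i) h
      rw [Finset.mem_filter, Finset.mem_Icc] at hmem
      simpa [aux, dif_pos h] using hmem.1.2
    · simp [aux, dif_neg h]
  have haux_ball : ∀ i, (pball q (aux i) : Set K) ⊆ Vs i := by
    intro i
    by_cases h : (s i).Nonempty
    · have hmem := Finset.min'_mem (s i) h
      rw [Finset.mem_filter] at hmem
      have : aux i = (s i).min' h := by simp [aux, dif_pos h]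
      rw [this]
      exact hj _ _ hmem.2
    · have : aux i = m i := by simp [aux, dif_neg h]
      rw [this]
      exact hm i
  refine ⟨fun i => min c0 (aux i), ⟨c0, fun i => min_le_left _ _⟩,
    fun l => ⟨max (j l) (-l), fun i hi => ?_⟩, fun f hf i => ?_⟩
  · have hjl : j l ≤ i := le_trans (le_max_left _ _) hi
    have hil : -i ≤ l := by
      have := le_trans (le_max_right (j l) (-l)) hi; omega
    rcases le_or_gt l (m i) with hl | hl
    · have hls : l ∈ s i := by
        rw [Finset.mem_filter, Finset.mem_Icc]
        exact ⟨⟨hil, hl⟩, hjl⟩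
      have hne : (s i).Nonempty := ⟨l, hls⟩
      have h1 : aux i ≤ l := by
        have := Finset.min'_le (s i) l hls
        simpa [aux, dif_pos hne] using this
      exact le_trans (min_le_right _ _) h1
    · exact le_trans (min_le_right _ _) (le_trans (haux_le i) hl.le)
  · rcases min_cases c0 (aux i) with ⟨hmin, _⟩ | ⟨hmin, _⟩
    · have hx := hf i
      rw [show (fun i => min c0 (aux i)) i = c0 from hmin] at hx
      exact hc0 i hx
    · have hx := hf i
      rw [show (fun i => min c0 (aux i)) i = aux i from hmin] at hx
      exact haux_ball i hx

end Aux

section Main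
set_option linter.unusedSectionVars false
set_option maxHeartbeats 1000000
variable {K} {q : ℕ}

lemma norm_sum_le_of_nonarch (hna : ∀ x y : K, ‖x + y‖ ≤ max ‖x‖ ‖y‖) {ι : Type}
    (s : Finset ι) (h : ι → K) {C : ℝ} (hC : 0 ≤ C) (hb : ∀ r ∈ s, ‖h r‖ ≤ C) :
    ‖∑ r ∈ s, h r‖ ≤ C := by
  classical
  induction s using Finset.induction_on with
  | empty => simpa using hC
  | insert _ _ hni ih =>
    rw [Finset.sum_insert hni]
    exact le_trans (hna _ _) (max_le (hb _ (Finset.mem_insert_self _ _))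
      (ih fun r hr => hb r (Finset.mem_insert_of_mem hr)))

lemma isVNBounded_aux (hq : 1 < q) (π : K) (hπ : ‖π‖ = ((q:ℝ))⁻¹)
    {A : Set (Mt K)} (hA : ∀ f ∈ A, ∀ n : ℤ, ‖f.1 n‖ ≤ 1) :
    IsVNBounded K (mixedTop K q) A := by
  intro Λ hΛ hΛopen
  obtain ⟨U, hU, hUsub⟩ := exists_basic_of_isOpen hq hΛopen hΛ.1.1
  obtain ⟨Vs, hVs, ⟨c0, hc0⟩, hev, rfl⟩ := hU
  have hπ0 : π ≠ 0 := by
    intro h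
    rw [h, norm_zero] at hπ
    have hpos : (0:ℝ) < ((q:ℝ))⁻¹ := by
      have := hq0 hq
      positivity
    rw [← hπ] at hpos
    exact lt_irrefl _ hpos
  have ha0 : (π ^ (-c0) : K) ≠ 0 := zpow_ne_zero _ hπ0
  refine ⟨π ^ (-c0), fun f hf => ?_⟩
  rw [Set.mem_smul_set_iff_inv_smul_mem₀ ha0]
  have hmem : ∀ i : ℤ, (((π ^ (-c0))⁻¹ • f : Mt K) : ℤ → K) i ∈ Vs i := by
    intro i
    apply hc0 i
    have h1 : (((π ^ (-c0))⁻¹ • f : Mt K) : ℤ → K) i = (π ^ (-c0))⁻¹ * f.1 i := rfl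
    have h2 : ‖(π ^ (-c0) : K)⁻¹‖ = (q:ℝ) ^ (-c0) := by
      rw [norm_inv, norm_zpow, hπ, ← inv_zpow, inv_inv, zpow_neg]
    show ‖(((π ^ (-c0))⁻¹ • f : Mt K) : ℤ → K) i‖ ≤ (q:ℝ) ^ (-c0)
    rw [h1, norm_mul, h2]
    calc (q:ℝ) ^ (-c0) * ‖f.1 i‖ ≤ (q:ℝ) ^ (-c0) * 1 :=
          mul_le_mul_of_nonneg_left (hA f hf i) (zpow_pos (hq0 hq) _).le
      _ = (q:ℝ) ^ (-c0) := mul_one _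
  have := hUsub _ hmem
  simpa using this

lemma isNetComplete_aux (hK : IsCharZeroLocalField K q) {ρ : ℤ → ℝ} (hρ : ∀ n, ρ n ≤ 1)
    {A : Set (Mt K)} (hAdef : A = {f : Mt K | ∀ n, ‖f.1 n‖ ≤ ρ n}) :
    IsNetComplete (mixedTop K q) A := by
  subst hAdef
  intro ι _ _ hdir x hxA hcauchy
  haveI : IsDirected ι (· ≤ ·) := ⟨hdir⟩
  have hq := hK.one_lt_q
  have hna := hK.nonarch
  haveI := hK.complete
  have hqinv : ((q:ℝ))⁻¹ < 1 := by
    rw [inv_lt_one_iff₀]; right; exact hq1R hq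
  -- ball lattices are neighbourhoods of 0
  have hWnhds : ∀ e : ℤ → ℤ, (∃ c, ∀ i, e i ≤ c) → (∀ l : ℤ, ∃ i0, ∀ i, i0 ≤ i → e i ≤ l) →
      ballLat (K := K) q e ∈ @nhds (Mt K) (mixedTop K q) 0 := by
    intro e hbdd hev
    letI : TopologicalSpace (Mt K) := mixedTop K q
    exact (ballLat_isOpen hna hq hbdd hev).mem_nhds (ballLat_zero hq e)
  have hWmN : ∀ m N : ℤ, ballLat (K := K) q (fun i => min m (N - i)) ∈
      @nhds (Mt K) (mixedTop K q) 0 := fun m N =>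
    hWnhds _ ⟨m, fun i => min_le_left _ _⟩
      (fun l => ⟨N - l, fun i hi => le_trans (min_le_right _ _) (by omega)⟩)
  -- uniform Cauchy estimates
  have hC : ∀ m N : ℤ, ∃ i0 : ι, ∀ j ≥ i0, ∀ k ≥ i0, ∀ n : ℤ,
      ‖(x j).1 n - (x k).1 n‖ ≤ (q:ℝ) ^ (-(min m (N - n))) := by
    intro m N
    obtain ⟨i0, h⟩ := hcauchy _ (hWmN m N)
    refine ⟨i0, fun j hj k hk n => ?_⟩
    have h1 := h j hj k hk n
    exact h1
  -- coordinatewise limits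
  have hlim : ∀ n : ℤ, ∃ b : K, Tendsto (fun k => (x k).1 n) atTop (nhds b) := by
    intro n
    have hcau : Cauchy (Filter.map (fun k => (x k).1 n) atTop) := by
      rw [Metric.cauchy_iff]
      refine ⟨Filter.map_neBot, fun ε hε => ?_⟩
      obtain ⟨mε, hm⟩ := exists_pow_lt_of_lt_one hε hqinv
      obtain ⟨i0, h⟩ := hC mε (n + mε)
      refine ⟨(fun k => (x k).1 n) '' Set.Ici i0,
        Filter.image_mem_map (Filter.Ici_mem_atTop i0), ?_⟩
      rintro _ ⟨j, hj, rfl⟩ _ ⟨k, hk, rfl⟩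
      have h2 := h j hj k hk n
      rw [show min (mε:ℤ) (n + mε - n) = mε by omega] at h2
      rw [dist_eq_norm]
      calc ‖(x j).1 n - (x k).1 n‖ ≤ (q:ℝ) ^ (-(mε:ℤ)) := h2
        _ = ((q:ℝ)⁻¹) ^ (mε:ℕ) := by rw [zpow_neg, ← inv_zpow, zpow_natCast]
        _ < ε := hm
    obtain ⟨b, hb⟩ := CompleteSpace.complete hcau
    exact ⟨b, hb⟩
  choose a ha using hlim
  -- limit estimates
  have key : ∀ (i0 : ι) (r : ℤ → ℝ),
      (∀ j, i0 ≤ j → ∀ k, i0 ≤ k → ∀ n, ‖(x j).1 n - (x k).1 n‖ ≤ r n) →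
      ∀ j, i0 ≤ j → ∀ n, ‖(x j).1 n - a n‖ ≤ r n := by
    intro i0 r h j hj n
    have h1 : Tendsto (fun k => ‖(x j).1 n - (x k).1 n‖) atTop (nhds ‖(x j).1 n - a n‖) :=
      (tendsto_const_nhds.sub (ha n)).norm
    apply le_of_tendsto h1
    filter_upwards [Filter.Ici_mem_atTop i0] with k hk
    exact h j hj k hk n
  -- a is bounded by ρ
  have haρ : ∀ n, ‖a n‖ ≤ ρ n := fun n =>
    le_of_tendsto (ha n).norm (Filter.Eventually.of_forall fun k => hxA k n)
  -- a tends to 0 at -∞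
  have hbot : Tendsto a atBot (nhds (0:K)) := by
    rw [Metric.tendsto_nhds]
    intro ε hε
    obtain ⟨mε, hm⟩ := exists_pow_lt_of_lt_one (half_pos hε) hqinv
    obtain ⟨i0, h⟩ := hC mε 0
    have h2 := key i0 _ (fun j hj k hk n => h j hj k hk n) i0 le_rfl
    have h3 := (x i0).2.2
    rw [Metric.tendsto_nhds] at h3
    filter_upwards [h3 (ε/2) (half_pos hε), Filter.eventually_le_atBot (-(mε:ℤ))] with n hn1 hn2
    rw [dist_zero_right]
    have h4 : ‖a n - (x i0).1 n‖ ≤ (q:ℝ) ^ (-(mε:ℤ)) := by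
      have h5 := h2 n
      rw [norm_sub_rev] at h5
      refine le_trans h5 (zpow_le_zpow_right₀ (hq1R hq).le ?_)
      omega
    have h6 : ‖(x i0).1 n‖ < ε/2 := by simpa [dist_zero_right] using hn1
    calc ‖a n‖ = ‖(a n - (x i0).1 n) + (x i0).1 n‖ := by ring_nf
      _ ≤ ‖a n - (x i0).1 n‖ + ‖(x i0).1 n‖ := norm_add_le _ _
      _ < (q:ℝ) ^ (-(mε:ℤ)) + ε/2 := by linarith
      _ = ((q:ℝ)⁻¹) ^ (mε:ℕ) + ε/2 := by rw [zpow_neg, ← inv_zpow, zpow_natCast]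
      _ < ε/2 + ε/2 := by linarith
      _ = ε := by ring
  refine ⟨⟨a, ⟨⟨1, fun n => le_trans (haρ n) (hρ n)⟩, hbot⟩⟩, fun n => haρ n, ?_⟩
  letI : TopologicalSpace (Mt K) := mixedTop K q
  rw [tendsto_nhds]
  intro s hs haMs
  obtain ⟨U, hU, hUsub⟩ := exists_basic_of_isOpen hq hs haMs
  obtain ⟨e, hbdd, hev, hWU⟩ := exists_ballLat_subset hna hq hU
  obtain ⟨i0, h⟩ := hcauchy _ (hWnhds e hbdd hev)
  apply Filter.mem_of_superset (Filter.mem_atTop i0)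
  intro j hj
  have hdiff : x j - ⟨a, ⟨⟨1, fun n => le_trans (haρ n) (hρ n)⟩, hbot⟩⟩ ∈ ballLat (K := K) q e := by
    intro n
    exact key i0 (fun n => (q:ℝ) ^ (-(e n))) (fun j' hj' k hk n' => h j' hj' k hk n') j hj n
  have := hUsub _ (hWU hdiff)
  simpa using this

lemma not_compactoid_aux (hq : 1 < q) (hna : ∀ x y : K, ‖x + y‖ ≤ max ‖x‖ ‖y‖)
    (π : K) (hπ : ‖π‖ = ((q:ℝ))⁻¹) {A : Set (Mt K)}
    (hA : ∀ f : Mt K, (∀ i, ‖f.1 i‖ ≤ ((q:ℝ))⁻¹) → (∀ i : ℤ, 0 ≤ i → f.1 i = 0) → f ∈ A) :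
    ¬ IsCompactoid K (mixedTop K q) A := by
  intro h
  have hbdd : ∃ c, ∀ i : ℤ, min 2 (-i) ≤ c := ⟨2, fun i => min_le_left _ _⟩
  have hev : ∀ l : ℤ, ∃ i0, ∀ i, i0 ≤ i → min 2 (-i) ≤ l :=
    fun l => ⟨-l, fun i hi => le_trans (min_le_right _ _) (by omega)⟩
  obtain ⟨m, v, hsub⟩ := h (ballLat q (fun i => min 2 (-i)))
    (ballLat_lattice hna hq hbdd) (ballLat_isOpen hna hq hbdd hev)
  set jj : Fin (m+1) → ℤ := fun r => -(r:ℤ) - 2 with hjjdef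
  have hjjval : ∀ r : Fin (m+1), jj r = -(r:ℤ) - 2 := fun r => rfl
  have hjr0 : ∀ r : Fin (m+1), (0:ℤ) ≤ (r:ℤ) := fun r => Int.natCast_nonneg _
  -- the element π t^{jj r} belongs to A
  have htA : ∀ r : Fin (m+1), π • mixedT K (jj r) ∈ A := by
    intro r
    apply hA
    · intro i
      have h1 : ((π • mixedT K (jj r) : Mt K) : ℤ → K) i
          = π * (if i = jj r then 1 else 0) := rfl
      show ‖((π • mixedT K (jj r) : Mt K) : ℤ → K) i‖ ≤ _
      rw [h1]
      split_ifs
      · rw [mul_one, hπ]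
      · rw [mul_zero, norm_zero]
        have := hq0 hq
        positivity
    · intro i hi
      have h1 : ((π • mixedT K (jj r) : Mt K) : ℤ → K) i
          = π * (if i = jj r then 1 else 0) := rfl
      rw [h1, if_neg (by rw [hjjval]; have := hjr0 r; omega), mul_zero]
  set w : Fin (m+1) → (Fin m → K) := fun r s => (v s).1 (jj r) with hwdef
  have hdep : ¬ LinearIndependent K w := by
    intro hli
    have h1 := hli.fintype_card_le_finrank
    rw [Module.finrank_pi] at h1
    simp [Fintype.card_fin] at h1
  obtain ⟨g, hg0, r1, hr1⟩ := Fintype.not_linearIndependent_iff.1 hdep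
  obtain ⟨r0, -, hr0max⟩ := Finset.exists_max_image Finset.univ (fun r => ‖g r‖)
    ⟨r1, Finset.mem_univ r1⟩
  have hM : 0 < ‖g r0‖ :=
    lt_of_lt_of_le (norm_pos_iff.2 hr1) (hr0max r1 (Finset.mem_univ r1))
  obtain ⟨l, hl, c, hc, hfeq⟩ := hsub (htA r0)
  have hjjinj : Function.Injective jj := by
    intro r r' hrr
    rw [hjjval, hjjval] at hrr
    have : (r:ℤ) = (r':ℤ) := by omega
    exact Fin.ext (by exact_mod_cast this)
  have hsum0 : ∀ s : Fin m, ∑ r, g r * w r s = 0 := by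
    intro s
    have := congrFun hg0 s
    simpa [Finset.sum_apply] using this
  have hco : ∀ r : Fin (m+1), (if r = r0 then π else 0) = l.1 (jj r) + ∑ s, c s * w r s := by
    intro r
    have h1 := congrArg (fun u : Mt K => (u : ℤ → K) (jj r)) hfeq
    have h2 : ((π • mixedT K (jj r0) : Mt K) : ℤ → K) (jj r)
        = π * (if jj r = jj r0 then 1 else 0) := rfl
    have h3 : ((l + ∑ s, c s • v s : Mt K) : ℤ → K) (jj r)
        = l.1 (jj r) + ∑ s, c s * (v s).1 (jj r) := by
      have : ((∑ s, c s • v s : Mt K) : ℤ → K) (jj r) = ∑ s, c s * (v s).1 (jj r) := by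
        rw [AddSubmonoidClass.coe_finset_sum, Finset.sum_apply]
        rfl
      show ((l : ℤ → K) + ((∑ s, c s • v s : Mt K) : ℤ → K)) (jj r) = _
      rw [Pi.add_apply, this]
    rw [h2, h3] at h1
    rw [← h1]
    by_cases hr : r = r0
    · rw [if_pos hr, if_pos (by rw [hr]), mul_one]
    · rw [if_neg hr, if_neg (fun hjr => hr (hjjinj hjr)), mul_zero]
  have hkey : (∑ r, g r * (if r = r0 then π else 0)) = ∑ r, g r * l.1 (jj r) := by
    have hterm : ∀ r : Fin (m+1), g r * (if r = r0 then π else 0)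
        = g r * l.1 (jj r) + ∑ s, c s * (g r * w r s) := by
      intro r
      rw [hco r, mul_add, Finset.mul_sum]
      congr 1
      exact Finset.sum_congr rfl (fun s _ => by ring)
    rw [Finset.sum_congr rfl (fun r _ => hterm r), Finset.sum_add_distrib, Finset.sum_comm]
    have hz : ∀ s : Fin m, ∑ r, c s * (g r * w r s) = 0 := by
      intro s
      rw [← Finset.mul_sum, hsum0 s, mul_zero]
    rw [Finset.sum_congr rfl (fun s _ => hz s), Finset.sum_const_zero, add_zero]
  have hL : (∑ r, g r * (if r = r0 then π else 0)) = g r0 * π := by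
    rw [Finset.sum_eq_single r0]
    · rw [if_pos rfl]
    · intro b _ hb
      rw [if_neg hb, mul_zero]
    · intro hr0
      exact absurd (Finset.mem_univ r0) hr0
  have hlb : ∀ r : Fin (m+1), ‖l.1 (jj r)‖ ≤ (q:ℝ) ^ (-(2:ℤ)) := by
    intro r
    have h1 := hl (jj r)
    have h2 : min (2:ℤ) (-(jj r)) = 2 := by
      rw [hjjval]
      have := hjr0 r
      omega
    rw [show (fun i : ℤ => min (2:ℤ) (-i)) (jj r) = 2 from h2] at h1
    exact h1
  have hR : ‖∑ r, g r * l.1 (jj r)‖ ≤ ‖g r0‖ * (q:ℝ) ^ (-(2:ℤ)) := by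
    refine norm_sum_le_of_nonarch hna _ _ (by positivity) (fun r _ => ?_)
    rw [norm_mul]
    exact mul_le_mul (hr0max r (Finset.mem_univ r)) (hlb r) (norm_nonneg _) (norm_nonneg _)
  have hfin : ‖g r0‖ * ((q:ℝ))⁻¹ ≤ ‖g r0‖ * (q:ℝ) ^ (-(2:ℤ)) := by
    have h1 : g r0 * π = ∑ r, g r * l.1 (jj r) := by rw [← hL, hkey]
    calc ‖g r0‖ * ((q:ℝ))⁻¹ = ‖g r0 * π‖ := by rw [norm_mul, hπ]
      _ = ‖∑ r, g r * l.1 (jj r)‖ := by rw [h1]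
      _ ≤ _ := hR
  have hlt : (q:ℝ) ^ (-(2:ℤ)) < ((q:ℝ))⁻¹ := by
    have h1 : (q:ℝ) ^ (-(2:ℤ)) < (q:ℝ) ^ (-(1:ℤ)) := zpow_lt_zpow_right₀ (hq1R hq) (by omega)
    have h2 : (q:ℝ) ^ (-(1:ℤ)) = ((q:ℝ))⁻¹ := by rw [zpow_neg, zpow_one]
    rw [h2] at h1
    exact h1
  have := mul_lt_mul_of_pos_left hlt hM
  linarith

lemma ballLat_anti {e e' : ℤ → ℤ} (hq : 1 < q) (h : ∀ i, e i ≤ e' i) :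
    ballLat (K := K) q e' ⊆ ballLat (K := K) q e :=
  fun f hf i => pball_mono hq (h i) (hf i)

lemma not_ccompact_aux (hq : 1 < q) (hna : ∀ x y : K, ‖x + y‖ ≤ max ‖x‖ ‖y‖)
    (π : K) (hπ : ‖π‖ = ((q:ℝ))⁻¹) {A : Set (Mt K)}
    (hA : ∀ f : Mt K, (∀ i, ‖f.1 i‖ ≤ ((q:ℝ))⁻¹) → (∀ i : ℤ, 0 ≤ i → f.1 i = 0) → f ∈ A) :
    ¬ IsCCompact K (mixedTop K q) A := by
  intro h
  set E : ℕ → ℤ → ℤ := fun N j => min (min 2 (-j)) (j + (N:ℤ) + 3) with hEdef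
  have hEval : ∀ (N : ℕ) (j : ℤ), E N j = min (min 2 (-j)) (j + (N:ℤ) + 3) := fun N j => rfl
  have hEbdd : ∀ N : ℕ, ∀ i : ℤ, E N i ≤ 2 := by
    intro N i; rw [hEval]; omega
  have hEev : ∀ N : ℕ, ∀ l : ℤ, ∃ i0, ∀ i, i0 ≤ i → E N i ≤ l := by
    intro N l
    exact ⟨-l, fun i hi => by rw [hEval]; omega⟩
  have hxc : ∀ N : ℕ, (fun j : ℤ => if -(N:ℤ)-1 ≤ j ∧ j ≤ -2 then π else (0:K)) ∈
      mixedCarrier K := by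
    intro N
    constructor
    · refine ⟨‖π‖, fun i => ?_⟩
      show ‖if -(N:ℤ)-1 ≤ i ∧ i ≤ -2 then π else (0:K)‖ ≤ ‖π‖
      split_ifs
      · exact le_rfl
      · rw [norm_zero]; exact norm_nonneg _
    · have hzero : Tendsto (fun _ : ℤ => (0:K)) atBot (nhds (0:K)) := tendsto_const_nhds
      refine hzero.congr' ?_
      filter_upwards [Filter.eventually_le_atBot (-(N:ℤ)-2)] with j hj
      have hcond : ¬ (-(N:ℤ)-1 ≤ j ∧ j ≤ -2) := by omega
      show (0:K) = if -(N:ℤ)-1 ≤ j ∧ j ≤ -2 then π else (0:K)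
      exact (if_neg hcond).symm
  set xs : ℕ → Mt K := fun N => ⟨_, hxc N⟩ with hxsdef
  have hxsA : ∀ N : ℕ, xs N ∈ A := by
    intro N
    apply hA
    · intro i
      show ‖if -(N:ℤ)-1 ≤ i ∧ i ≤ -2 then π else (0:K)‖ ≤ _
      split_ifs
      · rw [hπ]
      · simp only [norm_zero]
        positivity
    · intro i hi
      show (if -(N:ℤ)-1 ≤ i ∧ i ≤ -2 then π else (0:K)) = 0
      rw [if_neg (by omega)]
  have hmono : ∀ N M : ℕ, N ≤ M → ballLat (K := K) q (E M) ⊆ ballLat (K := K) q (E N) := by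
    intro N M hNM
    refine ballLat_anti hq (fun i => ?_)
    rw [hEval, hEval]
    have : (N:ℤ) ≤ (M:ℤ) := by exact_mod_cast hNM
    omega
  have hone : ∀ c : ℤ, c ≤ 0 → (1:ℝ) ≤ (q:ℝ) ^ (-c) := by
    intro c hc
    calc (1:ℝ) = (q:ℝ) ^ (0:ℤ) := (zpow_zero _).symm
      _ ≤ (q:ℝ) ^ (-c) := zpow_le_zpow_right₀ (hq1R hq).le (by omega)
  have hlt1 : ∀ c : ℤ, 1 ≤ c → (q:ℝ) ^ (-c) < 1 := by
    intro c hc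
    calc (q:ℝ) ^ (-c) ≤ (q:ℝ) ^ (-(1:ℤ)) := zpow_le_zpow_right₀ (hq1R hq).le (by omega)
      _ < (q:ℝ) ^ (0:ℤ) := zpow_lt_zpow_right₀ (hq1R hq) (by omega)
      _ = 1 := zpow_zero _
  have hLsub : ∀ N M : ℕ, ballLat (K := K) q (E M) ⊆ ballLat (K := K) q (E N) → N ≤ M := by
    intro N M hsub
    by_contra hNM
    push_neg at hNM
    have hMN : (M:ℤ) < (N:ℤ) := by exact_mod_cast hNM
    have ht : mixedT K (-(M:ℤ)-3) ∈ ballLat (K := K) q (E M) := by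
      intro i
      show ‖if i = -(M:ℤ)-3 then (1:K) else 0‖ ≤ (q:ℝ) ^ (-(E M i))
      split_ifs with hi
      · rw [norm_one]
        refine hone _ ?_
        rw [hEval]
        omega
      · simp only [norm_zero]
        positivity
    have hnt : ‖if (-(M:ℤ)-3) = -(M:ℤ)-3 then (1:K) else 0‖ ≤ (q:ℝ) ^ (-(E N (-(M:ℤ)-3))) :=
      hsub ht (-(M:ℤ)-3)
    rw [if_pos rfl, norm_one] at hnt
    have : (q:ℝ) ^ (-(E N (-(M:ℤ)-3))) < 1 := by
      refine hlt1 _ ?_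
      rw [hEval]
      omega
    linarith
  have hcoh : ∀ N M : ℕ, ballLat (K := K) q (E M) ⊆ ballLat (K := K) q (E N) →
      xs M - xs N ∈ ballLat (K := K) q (E N) := by
    intro N M hsub
    have hNM := hLsub N M hsub
    have hNM' : (N:ℤ) ≤ (M:ℤ) := by exact_mod_cast hNM
    intro i
    show ‖(if -(M:ℤ)-1 ≤ i ∧ i ≤ -2 then π else (0:K)) -
      (if -(N:ℤ)-1 ≤ i ∧ i ≤ -2 then π else (0:K))‖ ≤ (q:ℝ) ^ (-(E N i))
    by_cases hPM : -(M:ℤ)-1 ≤ i ∧ i ≤ -2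
    · by_cases hPN : -(N:ℤ)-1 ≤ i ∧ i ≤ -2
      · rw [if_pos hPM, if_pos hPN, sub_self, norm_zero]
        positivity
      · rw [if_pos hPM, if_neg hPN, sub_zero, hπ]
        calc ((q:ℝ))⁻¹ = (q:ℝ) ^ (-(1:ℤ)) := by rw [zpow_neg, zpow_one]
          _ ≤ (q:ℝ) ^ (-(E N i)) := by
              refine zpow_le_zpow_right₀ (hq1R hq).le ?_
              rw [hEval]
              omega
    · by_cases hPN : -(N:ℤ)-1 ≤ i ∧ i ≤ -2
      · exact absurd ⟨by omega, hPN.2⟩ hPM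
      · rw [if_neg hPM, if_neg hPN, sub_self, norm_zero]
        positivity
  obtain ⟨a, haA, ha⟩ := h ℕ (fun N => ballLat (K := K) q (E N))
    (fun N => ⟨ballLat_lattice hna hq ⟨2, hEbdd N⟩, ballLat_isOpen hna hq ⟨2, hEbdd N⟩ (hEev N)⟩)
    (fun N M => ⟨max N M, hmono N _ (le_max_left _ _), hmono M _ (le_max_right _ _)⟩)
    xs hxsA hcoh
  have hδ : (0:ℝ) < ((q:ℝ))⁻¹ - (q:ℝ) ^ (-(2:ℤ)) := by
    have h1 : (q:ℝ) ^ (-(2:ℤ)) < (q:ℝ) ^ (-(1:ℤ)) := zpow_lt_zpow_right₀ (hq1R hq) (by omega)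
    have h2 : (q:ℝ) ^ (-(1:ℤ)) = ((q:ℝ))⁻¹ := by rw [zpow_neg, zpow_one]
    rw [h2] at h1
    linarith
  have hlow : ∀ j : ℤ, j ≤ -2 → ((q:ℝ))⁻¹ - (q:ℝ) ^ (-(2:ℤ)) ≤ ‖a.1 j‖ := by
    intro j hj
    set N : ℕ := (-j-1).toNat with hN
    have hNj : (N:ℤ) = -j-1 := Int.toNat_of_nonneg (by omega)
    have hcond : -(N:ℤ)-1 ≤ j ∧ j ≤ -2 := by omega
    have h5 : ‖((a - xs N : Mt K) : ℤ → K) j‖ ≤ (q:ℝ) ^ (-(E N j)) := ha N j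
    have h4 : ((a - xs N : Mt K) : ℤ → K) j = a.1 j - π := by
      show a.1 j - (if -(N:ℤ)-1 ≤ j ∧ j ≤ -2 then π else (0:K)) = a.1 j - π
      rw [if_pos hcond]
    rw [h4] at h5
    have hE : E N j = 2 := by rw [hEval]; omega
    rw [hE] at h5
    have h6 : ‖π‖ - ‖a.1 j‖ ≤ ‖π - a.1 j‖ := norm_sub_norm_le _ _
    rw [norm_sub_rev] at h5
    rw [hπ] at h6
    linarith
  obtain ⟨j0, hj0⟩ : ∃ j0 : ℤ, ∀ j ≤ j0, ‖a.1 j‖ < ((q:ℝ))⁻¹ - (q:ℝ) ^ (-(2:ℤ)) := by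
    have h3 := a.2.2
    rw [Metric.tendsto_nhds] at h3
    obtain ⟨j0, hj⟩ := Filter.eventually_atBot.1 (h3 _ hδ)
    exact ⟨j0, fun j hjj => by simpa [dist_zero_right] using hj j hjj⟩
  have h7 := hlow (min j0 (-2)) (min_le_right _ _)
  have h8 := hj0 (min j0 (-2)) (min_le_left _ _)
  linarith

end Main



/-- In `K{{t}}` with the higher topology, the ring of integers `𝒪{{t}}` and
the rank-two ring of integers `Σ_{i<0} 𝔭 t^i + Σ_{i≥0} 𝒪 t^i` are bounded and complete
`𝒪`-submodules which are neither compactoid nor c-compact. -/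
theorem statement16 (q : ℕ) (hK : IsCharZeroLocalField K q) :
    (IsVNBounded K (mixedTop K q) (mixedIntegers K) ∧
      IsNetComplete (mixedTop K q) (mixedIntegers K) ∧
      ¬ IsCompactoid K (mixedTop K q) (mixedIntegers K) ∧
      ¬ IsCCompact K (mixedTop K q) (mixedIntegers K)) ∧
    (IsVNBounded K (mixedTop K q) (mixedRankTwo K q) ∧
      IsNetComplete (mixedTop K q) (mixedRankTwo K q) ∧
      ¬ IsCompactoid K (mixedTop K q) (mixedRankTwo K q) ∧
      ¬ IsCCompact K (mixedTop K q) (mixedRankTwo K q)) := by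
  obtain ⟨π, hπ⟩ := hK.exists_uniformizer
  have hq := hK.one_lt_q
  have hna := hK.nonarch
  have hqinvle : ((q:ℝ))⁻¹ ≤ 1 :=
    le_of_lt (by rw [inv_lt_one_iff₀]; right; exact hq1R hq)
  have hint : mixedIntegers K =
      {f : Mt K | ∀ n : ℤ, ‖f.1 n‖ ≤ (fun _ : ℤ => (1:ℝ)) n} := rfl
  have hrt : mixedRankTwo K q =
      {f : Mt K | ∀ n : ℤ, ‖f.1 n‖ ≤ (fun n : ℤ => if n < 0 then ((q:ℝ))⁻¹ else 1) n} := by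
    ext f
    constructor
    · rintro ⟨h1, h2⟩ n
      by_cases hn : n < 0
      · simpa [hn] using h1 n hn
      · simpa [hn] using h2 n (by omega)
    · intro hf
      constructor
      · intro i hi
        simpa [hi] using hf i
      · intro i hi
        simpa [show ¬ i < 0 by omega] using hf i
  have hsubI : ∀ f : Mt K, (∀ i, ‖f.1 i‖ ≤ ((q:ℝ))⁻¹) → (∀ i : ℤ, 0 ≤ i → f.1 i = 0) →
      f ∈ mixedIntegers K :=
    fun f h1 _ i => le_trans (h1 i) hqinvle
  have hsubR : ∀ f : Mt K, (∀ i, ‖f.1 i‖ ≤ ((q:ℝ))⁻¹) → (∀ i : ℤ, 0 ≤ i → f.1 i = 0) →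
      f ∈ mixedRankTwo K q :=
    fun f h1 h2 => ⟨fun i _ => h1 i, fun i hi => by rw [h2 i hi, norm_zero]; exact zero_le_one⟩
  have hbndI : ∀ f ∈ mixedIntegers K, ∀ n : ℤ, ‖f.1 n‖ ≤ 1 := fun f hf n => hf n
  have hbndR : ∀ f ∈ mixedRankTwo K q, ∀ n : ℤ, ‖f.1 n‖ ≤ 1 := by
    intro f hf n
    by_cases hn : n < 0
    · exact le_trans (hf.1 n hn) hqinvle
    · exact hf.2 n (by omega)
  refine ⟨⟨isVNBounded_aux hq π hπ hbndI,
          isNetComplete_aux hK (fun _ => le_rfl) hint,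
          not_compactoid_aux hq hna π hπ hsubI,
          not_ccompact_aux hq hna π hπ hsubI⟩,
         ⟨isVNBounded_aux hq π hπ hbndR,
          isNetComplete_aux hK ?_ hrt,
          not_compactoid_aux hq hna π hπ hsubR,
          not_ccompact_aux hq hna π hπ hsubR⟩⟩
  intro n
  by_cases hn : n < 0
  · simpa [hn] using hqinvle
  · simp [hn]


end TwoDimLF
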